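/- Let α₀, δ be coprime Gaussian integers with δ = c + di, gcd(c,d) = 1, and α_k = α₀ + k·δ. If two distinct terms α_s and α_t of the sequence share a common non-unit Gaussian divisor β, then ν(β) divides s − t; in particular ν(β) ≤ |s − t|. -/

import Mathlib

/-- ν(x+iy) = (x²+y²)/gcd(x,y) for a Gaussian integer. -/
def nu (β : GaussianInt) : ℤ := (β.re ^ 2 + β.im ^ 2) / Int.gcd β.re β.im

lemma nu_dvd_int (β : GaussianInt) (hβ0 : β ≠ 0) (n : ℤ) (hd : β ∣ (n : GaussianInt)) :
    nu β ∣ n := by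
  obtain ⟨γ, hn⟩ := hd
  set x := β.re with hx
  set y := β.im with hy
  have hm : ((n : GaussianInt)) * star β = (Zsqrtd.norm β : GaussianInt) * γ := by
    rw [hn, Zsqrtd.norm_eq_mul_conj]; ring
  have hre := congrArg Zsqrtd.re hm
  have him := congrArg Zsqrtd.im hm
  simp [Zsqrtd.re_mul, Zsqrtd.im_mul, ← hx, ← hy] at hre him
  -- hre : n * x = norm β * γ.re (roughly), him : -(n*y) = ...
  have hdx : Zsqrtd.norm β ∣ n * x := ⟨γ.re, by linarith [hre]⟩
  have hdy : Zsqrtd.norm β ∣ n * y := by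
    refine ⟨-γ.im, ?_⟩; linarith [him]
  have hg : (Int.gcd x y : ℤ) = x * Int.gcdA x y + y * Int.gcdB x y := Int.gcd_eq_gcd_ab x y
  have hng : Zsqrtd.norm β ∣ n * (Int.gcd x y : ℤ) := by
    rw [hg]
    have : n * (x * Int.gcdA x y + y * Int.gcdB x y)
        = (n * x) * Int.gcdA x y + (n * y) * Int.gcdB x y := by ring
    rw [this]
    exact dvd_add (hdx.mul_right _) (hdy.mul_right _)
  have hgd : (Int.gcd x y : ℤ) ∣ x ^ 2 + y ^ 2 := by
    have h1 : (Int.gcd x y : ℤ) ∣ x := Int.gcd_dvd_left x y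
    have h2 : (Int.gcd x y : ℤ) ∣ y := Int.gcd_dvd_right x y
    exact dvd_add (by rw [sq]; exact h1.mul_right x) (by rw [sq]; exact h2.mul_right y)
  have hnorm : Zsqrtd.norm β = x ^ 2 + y ^ 2 := by
    simp [Zsqrtd.norm, ← hx, ← hy]; ring
  have hgne : (Int.gcd x y : ℤ) ≠ 0 := by
    simp only [ne_eq, Int.natCast_eq_zero, Int.gcd_eq_zero_iff, not_and_or]
    rcases (by simpa [Zsqrtd.ext_iff] using hβ0 : ¬(x = 0 ∧ y = 0)) with h'
    tauto
  have hnu : nu β * (Int.gcd x y : ℤ) = Zsqrtd.norm β := by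
    rw [nu, hnorm, Int.ediv_mul_cancel hgd]
  obtain ⟨m, hm'⟩ := hng
  refine ⟨m, ?_⟩
  have : n * (Int.gcd x y : ℤ) = (nu β * m) * (Int.gcd x y : ℤ) := by
    rw [hm', ← hnu]; ring
  exact mul_right_cancel₀ hgne this

theorem common_divisor_nu_dvd_diff (α₀ δ : GaussianInt) (h : IsCoprime α₀ δ)
    (hδ : Int.gcd δ.re δ.im = 1) (s t : ℤ) (hst : s ≠ t) (β : GaussianInt)
    (hβ : ¬ IsUnit β)
    (hs : β ∣ α₀ + (s : GaussianInt) * δ) (ht : β ∣ α₀ + (t : GaussianInt) * δ) :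
    nu β ∣ s - t ∧ nu β ≤ |s - t| := by
  have hcop : IsCoprime β δ := by
    have h1 : IsCoprime (α₀ + δ * (s : GaussianInt)) δ := h.add_mul_left_left _
    have h2 : β ∣ α₀ + δ * (s : GaussianInt) := by rwa [mul_comm] at h1 ⊢ <;> try exact hs
    exact IsCoprime.of_isCoprime_of_dvd_left h1 h2
  have hdvd : β ∣ ((s - t : ℤ) : GaussianInt) * δ := by
    have : ((s - t : ℤ) : GaussianInt) * δ = (α₀ + (s : GaussianInt) * δ) - (α₀ + (t : GaussianInt) * δ) := by
      push_cast; ring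
    rw [this]; exact dvd_sub hs ht
  have hβst : β ∣ ((s - t : ℤ) : GaussianInt) := hcop.dvd_of_dvd_mul_right hdvd
  have hst0 : s - t ≠ 0 := sub_ne_zero.mpr hst
  have hβ0 : β ≠ 0 := by
    rintro rfl
    rw [zero_dvd_iff] at hβst
    exact hst0 (by exact_mod_cast hβst)
  have hd := nu_dvd_int β hβ0 _ hβst
  exact ⟨hd, Int.le_of_dvd (abs_pos.mpr hst0) ((dvd_abs _ _).mpr hd)⟩
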